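/- Let a : ℕ → ℝ and b : ℕ → ℝ be nonnegative sequences supported on {0,...,n} and {0,...,m} respectively, each log-concave with no internal zeros. Then their convolution c, defined by c_t = Σ_{i+j=t} a_i b_j, is log-concave: c_t^2 ≥ c_{t-1} c_{t+1} for all 1 ≤ t ≤ m+n-1. -/

import Mathlib

noncomputable def extSeq (a : ℕ → ℝ) : ℤ → ℝ := fun k => if 0 ≤ k then a k.toNat else 0

lemma extSeq_nonneg (a : ℕ → ℝ) (ha : ∀ i, 0 ≤ a i) (k : ℤ) : 0 ≤ extSeq a k := by
  unfold extSeq; split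
  · exact ha _
  · exact le_refl 0

lemma extSeq_nat (a : ℕ → ℝ) (k : ℕ) : extSeq a (k : ℤ) = a k := by
  simp [extSeq]

lemma extSeq_neg (a : ℕ → ℝ) (k : ℤ) (h : k < 0) : extSeq a k = 0 := by
  simp [extSeq, not_le.mpr h]

lemma tp2 (n : ℕ) (a : ℕ → ℝ) (ha0 : ∀ i, 0 ≤ a i)
    (hasupp : ∀ i, n < i → a i = 0)
    (halc : ∀ k, 1 ≤ k → k ≤ n - 1 → a k ^ 2 ≥ a (k - 1) * a (k + 1))
    (haniz : ¬ ∃ p q r, p < q ∧ q < r ∧ r ≤ n ∧ a p ≠ 0 ∧ a q = 0 ∧ a r ≠ 0)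
    (p q : ℤ) (hpq : p ≤ q) :
    extSeq a p * extSeq a (q + 1) ≤ extSeq a (p + 1) * extSeq a q := by
  by_cases hp : extSeq a p = 0
  · rw [hp, zero_mul]
    exact mul_nonneg (extSeq_nonneg a ha0 _) (extSeq_nonneg a ha0 _)
  by_cases hq : extSeq a (q + 1) = 0
  · rw [hq, mul_zero]
    exact mul_nonneg (extSeq_nonneg a ha0 _) (extSeq_nonneg a ha0 _)
  have hp0 : 0 ≤ p := by
    by_contra h
    push_neg at h
    exact hp (extSeq_neg a p h)
  have hq0 : 0 ≤ q := le_trans hp0 hpq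
  set P := p.toNat with hPdef
  set Q := q.toNat with hQdef
  have hP : (P : ℤ) = p := Int.toNat_of_nonneg hp0
  have hQ : (Q : ℤ) = q := Int.toNat_of_nonneg hq0
  have r1 : extSeq a p = a P := by rw [← hP, extSeq_nat]
  have r2 : extSeq a (q + 1) = a (Q + 1) := by
    rw [show q + 1 = ((Q + 1 : ℕ) : ℤ) by omega, extSeq_nat]
  have r3 : extSeq a (p + 1) = a (P + 1) := by
    rw [show p + 1 = ((P + 1 : ℕ) : ℤ) by omega, extSeq_nat]
  have r4 : extSeq a q = a Q := by rw [← hQ, extSeq_nat]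
  rw [r1, r2, r3, r4]
  have haP : a P ≠ 0 := by rwa [r1] at hp
  have haQ1 : a (Q + 1) ≠ 0 := by rwa [r2] at hq
  have hQn : Q + 1 ≤ n := by
    by_contra h
    exact haQ1 (hasupp _ (by omega))
  have hPQ : P ≤ Q := by omega
  have hpos : ∀ k, P ≤ k → k ≤ Q + 1 → 0 < a k := by
    intro k h1 h2
    rcases lt_or_eq_of_le (ha0 k) with h | h
    · exact h
    exfalso
    have hk : a k = 0 := h.symm
    have hne1 : k ≠ P := fun e => haP (e ▸ hk)
    have hne2 : k ≠ Q + 1 := fun e => haQ1 (e ▸ hk)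
    exact haniz ⟨P, k, Q + 1, by omega, by omega, hQn, haP, hk, haQ1⟩
  have chain : ∀ d, P + d ≤ Q → a P * a (P + d + 1) ≤ a (P + 1) * a (P + d) := by
    intro d
    induction d with
    | zero => intro _; simp [mul_comm]
    | succ d ih =>
      intro hd
      have ih' := ih (by omega)
      have hlc := halc (P + d + 1) (by omega) (by omega)
      have hlc' : a (P + d + 1) ^ 2 ≥ a (P + d) * a (P + d + 2) := by
        have e1 : P + d + 1 - 1 = P + d := by omega
        have e2 : P + d + 1 + 1 = P + d + 2 := by omega
        rwa [e1, e2] at hlc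
      have h1 : 0 < a (P + d) := hpos _ (by omega) (by omega)
      have h2 : 0 < a (P + d + 1) := hpos _ (by omega) (by omega)
      have h4 : 0 ≤ a P := ha0 P
      show a P * a (P + d + 2) ≤ a (P + 1) * a (P + d + 1)
      nlinarith [mul_le_mul_of_nonneg_right ih' h2.le, mul_le_mul_of_nonneg_left hlc' h4]
  have := chain (Q - P) (by omega)
  have e : P + (Q - P) = Q := by omega
  rwa [e] at this

lemma double_sum_pos (N : ℕ) (g h : ℕ → ℕ → ℝ)
    (hanti : ∀ i j, h j i = - h i j)
    (hpos : ∀ i j, i ≤ j → 0 ≤ (g i j - g j i) * h i j) :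
    0 ≤ ∑ i ∈ Finset.range N, ∑ j ∈ Finset.range N, g i j * h i j := by
  have key : ∀ i j, 0 ≤ (g i j - g j i) * h i j := by
    intro i j
    rcases le_total i j with hc | hc
    · exact hpos i j hc
    · have h1 := hpos j i hc
      have e : (g i j - g j i) * h i j = (g j i - g i j) * h j i := by
        rw [hanti i j]; ring
      rw [e]; exact h1
  have h2 : ∑ i ∈ Finset.range N, ∑ j ∈ Finset.range N, g j i * h i j
      = - ∑ i ∈ Finset.range N, ∑ j ∈ Finset.range N, g i j * h i j := by
    rw [Finset.sum_comm, ← Finset.sum_neg_distrib]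
    refine Finset.sum_congr rfl fun x _ => ?_
    rw [← Finset.sum_neg_distrib]
    refine Finset.sum_congr rfl fun y _ => ?_
    rw [hanti x y]
    ring
  have h3 : 0 ≤ ∑ i ∈ Finset.range N, ∑ j ∈ Finset.range N, (g i j - g j i) * h i j :=
    Finset.sum_nonneg fun i _ => Finset.sum_nonneg fun j _ => key i j
  have h4 : ∑ i ∈ Finset.range N, ∑ j ∈ Finset.range N, (g i j - g j i) * h i j
      = (∑ i ∈ Finset.range N, ∑ j ∈ Finset.range N, g i j * h i j)
        - ∑ i ∈ Finset.range N, ∑ j ∈ Finset.range N, g j i * h i j := by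
    rw [← Finset.sum_sub_distrib]
    refine Finset.sum_congr rfl fun i _ => ?_
    rw [← Finset.sum_sub_distrib]
    refine Finset.sum_congr rfl fun j _ => ?_
    ring
  rw [h4, h2] at h3
  linarith

theorem convolution_log_concave (n m : ℕ) (a b : ℕ → ℝ)
    (ha0 : ∀ i, 0 ≤ a i) (hb0 : ∀ i, 0 ≤ b i)
    (hasupp : ∀ i, n < i → a i = 0) (hbsupp : ∀ i, m < i → b i = 0)
    (halc : ∀ k, 1 ≤ k → k ≤ n - 1 → a k ^ 2 ≥ a (k - 1) * a (k + 1))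
    (hblc : ∀ k, 1 ≤ k → k ≤ m - 1 → b k ^ 2 ≥ b (k - 1) * b (k + 1))
    (haniz : ¬ ∃ p q r, p < q ∧ q < r ∧ r ≤ n ∧ a p ≠ 0 ∧ a q = 0 ∧ a r ≠ 0)
    (hbniz : ¬ ∃ p q r, p < q ∧ q < r ∧ r ≤ m ∧ b p ≠ 0 ∧ b q = 0 ∧ b r ≠ 0) :
    ∀ t, 1 ≤ t → t ≤ m + n - 1 →
      (∑ i ∈ Finset.range (t + 1), a i * b (t - i)) ^ 2 ≥
        (∑ i ∈ Finset.range t, a i * b (t - 1 - i)) *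
        (∑ i ∈ Finset.range (t + 2), a i * b (t + 1 - i)) := by
  intro t ht _
  have e1 : (∑ i ∈ Finset.range (t + 1), a i * b (t - i))
      = ∑ i ∈ Finset.range (t + 2), extSeq a i * extSeq b ((t : ℤ) - i) := by
    rw [Finset.sum_range_succ (fun i => extSeq a (i : ℤ) * extSeq b ((t : ℤ) - i)) (t + 1)]
    rw [show ((t : ℤ) - ((t + 1 : ℕ) : ℤ)) = (-1 : ℤ) by push_cast; ring,
      extSeq_neg b (-1) (by norm_num), mul_zero, add_zero]
    refine Finset.sum_congr rfl fun i hi => ?_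
    have hi' : i ≤ t := Nat.lt_succ_iff.mp (Finset.mem_range.mp hi)
    rw [extSeq_nat, show ((t : ℤ) - i) = ((t - i : ℕ) : ℤ) by omega, extSeq_nat]
  have e0 : (∑ i ∈ Finset.range t, a i * b (t - 1 - i))
      = ∑ i ∈ Finset.range (t + 2), extSeq a i * extSeq b ((t : ℤ) - 1 - i) := by
    rw [Finset.sum_range_succ (fun i => extSeq a (i : ℤ) * extSeq b ((t : ℤ) - 1 - i)) (t + 1),
      Finset.sum_range_succ (fun i => extSeq a (i : ℤ) * extSeq b ((t : ℤ) - 1 - i)) t]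
    rw [show ((t : ℤ) - 1 - ((t + 1 : ℕ) : ℤ)) = (-2 : ℤ) by push_cast; ring,
      extSeq_neg b (-2) (by norm_num), mul_zero, add_zero]
    rw [show ((t : ℤ) - 1 - (t : ℤ)) = (-1 : ℤ) by ring,
      extSeq_neg b (-1) (by norm_num), mul_zero, add_zero]
    refine Finset.sum_congr rfl fun i hi => ?_
    have hi' : i < t := Finset.mem_range.mp hi
    rw [extSeq_nat, show ((t : ℤ) - 1 - i) = ((t - 1 - i : ℕ) : ℤ) by omega, extSeq_nat]
  have e2 : (∑ i ∈ Finset.range (t + 2), a i * b (t + 1 - i))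
      = ∑ i ∈ Finset.range (t + 2), extSeq a i * extSeq b ((t : ℤ) + 1 - i) := by
    refine Finset.sum_congr rfl fun i hi => ?_
    have hi' : i ≤ t + 1 := Nat.lt_succ_iff.mp (Finset.mem_range.mp hi)
    rw [extSeq_nat, show ((t : ℤ) + 1 - i) = ((t + 1 - i : ℕ) : ℤ) by omega, extSeq_nat]
  have hd1 : (∑ j ∈ Finset.range (t + 2), extSeq a ((j : ℤ) - 1) * extSeq b ((t : ℤ) + 1 - j))
      = ∑ i ∈ Finset.range (t + 2), extSeq a i * extSeq b ((t : ℤ) - i) := by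
    rw [Finset.sum_range_succ'
      (fun j => extSeq a ((j : ℤ) - 1) * extSeq b ((t : ℤ) + 1 - j)) (t + 1)]
    rw [Finset.sum_range_succ (fun i => extSeq a (i : ℤ) * extSeq b ((t : ℤ) - i)) (t + 1)]
    rw [show (((0 : ℕ) : ℤ) - 1) = (-1 : ℤ) by norm_num, extSeq_neg a (-1) (by norm_num),
      zero_mul, add_zero]
    rw [show ((t : ℤ) - ((t + 1 : ℕ) : ℤ)) = (-1 : ℤ) by push_cast; ring,
      extSeq_neg b (-1) (by norm_num), mul_zero, add_zero]
    refine Finset.sum_congr rfl fun j _ => ?_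
    rw [show (((j + 1 : ℕ) : ℤ) - 1) = (j : ℤ) by push_cast; ring,
      show ((t : ℤ) + 1 - ((j + 1 : ℕ) : ℤ)) = ((t : ℤ) - j) by push_cast; ring]
  have hd0 : (∑ j ∈ Finset.range (t + 2), extSeq a ((j : ℤ) - 1) * extSeq b ((t : ℤ) - j))
      = ∑ i ∈ Finset.range (t + 2), extSeq a i * extSeq b ((t : ℤ) - 1 - i) := by
    rw [Finset.sum_range_succ'
      (fun j => extSeq a ((j : ℤ) - 1) * extSeq b ((t : ℤ) - j)) (t + 1)]
    rw [Finset.sum_range_succ (fun i => extSeq a (i : ℤ) * extSeq b ((t : ℤ) - 1 - i)) (t + 1)]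
    rw [show (((0 : ℕ) : ℤ) - 1) = (-1 : ℤ) by norm_num, extSeq_neg a (-1) (by norm_num),
      zero_mul, add_zero]
    rw [show ((t : ℤ) - 1 - ((t + 1 : ℕ) : ℤ)) = (-2 : ℤ) by push_cast; ring,
      extSeq_neg b (-2) (by norm_num), mul_zero, add_zero]
    refine Finset.sum_congr rfl fun j _ => ?_
    rw [show (((j + 1 : ℕ) : ℤ) - 1) = (j : ℤ) by push_cast; ring,
      show ((t : ℤ) - ((j + 1 : ℕ) : ℤ)) = ((t : ℤ) - 1 - j) by push_cast; ring]
  have key : 0 ≤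
      (∑ i ∈ Finset.range (t + 2), extSeq a i * extSeq b ((t : ℤ) - i)) *
        (∑ j ∈ Finset.range (t + 2), extSeq a ((j : ℤ) - 1) * extSeq b ((t : ℤ) + 1 - j)) -
      (∑ i ∈ Finset.range (t + 2), extSeq a i * extSeq b ((t : ℤ) + 1 - i)) *
        (∑ j ∈ Finset.range (t + 2), extSeq a ((j : ℤ) - 1) * extSeq b ((t : ℤ) - j)) := by
    rw [Finset.sum_mul_sum, Finset.sum_mul_sum, ← Finset.sum_sub_distrib]
    have expand : ∀ i ∈ Finset.range (t + 2),
        ((∑ j ∈ Finset.range (t + 2), extSeq a (i : ℤ) * extSeq b ((t:ℤ) - i) *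
            (extSeq a ((j:ℤ) - 1) * extSeq b ((t:ℤ) + 1 - j)))
        - ∑ j ∈ Finset.range (t + 2), extSeq a (i : ℤ) * extSeq b ((t:ℤ) + 1 - i) *
            (extSeq a ((j:ℤ) - 1) * extSeq b ((t:ℤ) - j)))
        = ∑ j ∈ Finset.range (t + 2),
            (fun i j : ℕ => extSeq a (i : ℤ) * extSeq a ((j:ℤ) - 1)) i j *
            (fun i j : ℕ => extSeq b ((t:ℤ) - i) * extSeq b ((t:ℤ) + 1 - j)
              - extSeq b ((t:ℤ) + 1 - i) * extSeq b ((t:ℤ) - j)) i j := by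
      intro i _
      rw [← Finset.sum_sub_distrib]
      refine Finset.sum_congr rfl fun j _ => ?_
      simp only []
      ring
    rw [Finset.sum_congr rfl expand]
    refine double_sum_pos (t + 2)
      (fun i j => extSeq a (i : ℤ) * extSeq a ((j : ℤ) - 1))
      (fun i j => extSeq b ((t:ℤ) - i) * extSeq b ((t:ℤ) + 1 - j)
        - extSeq b ((t:ℤ) + 1 - i) * extSeq b ((t:ℤ) - j))
      (fun i j => by ring) (fun i j hij => ?_)
    apply mul_nonneg
    · have h := tp2 n a ha0 hasupp halc haniz ((i : ℤ) - 1) ((j : ℤ) - 1) (by omega)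
      rw [show ((i : ℤ) - 1) + 1 = (i : ℤ) by ring,
        show ((j : ℤ) - 1) + 1 = (j : ℤ) by ring] at h
      nlinarith [h]
    · have h := tp2 m b hb0 hbsupp hblc hbniz ((t : ℤ) - j) ((t : ℤ) - i) (by omega)
      rw [show ((t : ℤ) - j) + 1 = (t : ℤ) + 1 - j by ring,
        show ((t : ℤ) - i) + 1 = (t : ℤ) + 1 - i by ring] at h
      nlinarith [h]
  rw [hd1, hd0] at key
  rw [e1, e0, e2, ge_iff_le, pow_two]
  nlinarith [key]
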